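/- Importance sampling, Lipschitz densities: in the importance-sampling setting, suppose the index set T is a bounded subset of ℝ^m equipped with a norm ‖·‖. If there exists a Borel measurable map F : ℝ → ℝ with ∫_ℝ |f(x)| F(x) dx < +∞ such that |p_s(x) − p_t(x)| ≤ ‖s − t‖ · F(x) for all s, t ∈ T and all x ∈ ℝ, then the importance-sampling estimator Ê̲_n^{𝒫/P}(f) is a strongly consistent estimator of E̲^𝒫(f). -/

import Mathlib

open MeasureTheory Filter Topology ProbabilityTheory
open scoped ENNReal
open Metric Bornology
open scoped NNReal

noncomputable section

/-- The positive part of an extended real number, as an element of `ℝ≥0∞`. -/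
def epos (x : EReal) : ℝ≥0∞ := if x = ⊤ then ⊤ else ENNReal.ofReal x.toReal

/-- The (possibly infinite) expectation `E(g) = ∫ g⁺ − ∫ g⁻` of an extended-real map. -/
def eExp {Ω : Type*} [MeasurableSpace Ω] (μ : Measure Ω) (g : Ω → EReal) : EReal :=
  ((∫⁻ ω, epos (g ω) ∂μ : ℝ≥0∞) : EReal) - ((∫⁻ ω, epos (-(g ω)) ∂μ : ℝ≥0∞) : EReal)

/-- `E(g)` exists: at least one of `E(g⁺)`, `E(g⁻)` is finite. -/
def eExpExists {Ω : Type*} [MeasurableSpace Ω] (μ : Measure Ω) (g : Ω → EReal) : Prop :=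
  (∫⁻ ω, epos (g ω) ∂μ) ≠ ⊤ ∨ (∫⁻ ω, epos (-(g ω)) ∂μ) ≠ ⊤

/-- Outer expectation of an arbitrary extended-real map: the infimum of `E(g)` over all
measurable `g ≥ h` whose expectation exists. -/
def outerExp {Ω : Type*} [MeasurableSpace Ω] (μ : Measure Ω) (h : Ω → EReal) : EReal :=
  sInf {y : EReal | ∃ g : Ω → EReal,
    Measurable g ∧ (∀ ω, h ω ≤ g ω) ∧ eExpExists μ g ∧ eExp μ g = y}

/-- Inner expectation of an arbitrary extended-real map. -/
def innerExp {Ω : Type*} [MeasurableSpace Ω] (μ : Measure Ω) (h : Ω → EReal) : EReal :=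
  - outerExp μ (fun ω => - h ω)

/-- `g` is a minimal measurable cover of `h` w.r.t. `μ`: it is measurable, dominates `h`
pointwise, and is a.s. below any measurable map dominating `h` pointwise. -/
def IsMinMeasCover {Ω : Type*} [MeasurableSpace Ω] (μ : Measure Ω) (h g : Ω → EReal) : Prop :=
  Measurable g ∧ (∀ ω, h ω ≤ g ω) ∧
    ∀ g' : Ω → EReal, Measurable g' → (∀ ω, h ω ≤ g' ω) → ∀ᵐ ω ∂μ, g ω ≤ g' ω

/-- Absolute value on extended reals. -/
def eabs (x : EReal) : EReal := max x (-x)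

/-! ### Auxiliary lemmas -/

lemma ISaux.slln (μ : Measure (ℕ → ℝ)) [IsProbabilityMeasure μ] (P : Measure ℝ)
    (hmap : ∀ k : ℕ, μ.map (fun ω => ω k) = P)
    (hind : iIndepFun (m := fun _ : ℕ => (inferInstance : MeasurableSpace ℝ))
      (fun k (ω : ℕ → ℝ) => ω k) μ)
    (g : ℝ → ℝ) (hg : Measurable g) (hgi : Integrable g P) :
    ∀ᵐ ω ∂μ, Tendsto (fun n : ℕ => (n : ℝ)⁻¹ * ∑ k ∈ Finset.range n, g (ω k)) atTop
      (𝓝 (∫ x, g x ∂P)) := by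
  set X : ℕ → (ℕ → ℝ) → ℝ := fun k ω => g (ω k) with hX
  have hint : Integrable (X 0) μ := by
    have : Integrable g (μ.map (fun ω => ω 0)) := by rw [hmap 0]; exact hgi
    exact (integrable_map_measure hg.aestronglyMeasurable
      (measurable_pi_apply 0).aemeasurable).mp this
  have hindep : Pairwise (Function.onFun (IndepFun · · μ) X) := by
    intro i j hij
    exact (hind.indepFun hij).comp hg hg
  have hident : ∀ i, IdentDistrib (X i) (X 0) μ μ := by
    intro i
    have : IdentDistrib (fun ω : ℕ → ℝ => ω i) (fun ω : ℕ → ℝ => ω 0) μ μ :=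
      ⟨(measurable_pi_apply i).aemeasurable, (measurable_pi_apply 0).aemeasurable,
        by rw [hmap i, hmap 0]⟩
    exact this.comp hg
  have h := strong_law_ae X hint hindep hident
  have hE : (∫ ω, X 0 ω ∂μ) = ∫ x, g x ∂P := by
    rw [← hmap 0, integral_map (measurable_pi_apply 0).aemeasurable hg.aestronglyMeasurable]
  filter_upwards [h] with ω hω
  rw [hE] at hω
  simpa [smul_eq_mul] using hω

lemma ISaux.seminorm_sum_le {m : ℕ} (N : Seminorm ℝ (Fin m → ℝ)) {ι} (s : Finset ι)
    (g : ι → (Fin m → ℝ)) : N (∑ i ∈ s, g i) ≤ ∑ i ∈ s, N (g i) := by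
  classical
  induction s using Finset.cons_induction with
  | empty => simp
  | cons a s ha ih =>
    rw [Finset.sum_cons, Finset.sum_cons]
    exact (map_add_le_add N _ _).trans (add_le_add le_rfl ih)

lemma ISaux.seminorm_le {m : ℕ} (N : Seminorm ℝ (Fin m → ℝ)) :
    ∃ CN : ℝ, 0 ≤ CN ∧ ∀ v, N v ≤ CN * ‖v‖ := by
  refine ⟨∑ i : Fin m, N (fun j => if i = j then 1 else 0),
    Finset.sum_nonneg fun i _ => apply_nonneg N _, fun v => ?_⟩
  calc N v = N (∑ i, (v i) • fun j => if i = j then (1:ℝ) else 0) := by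
        rw [← pi_eq_sum_univ v]
    _ ≤ ∑ i, N ((v i) • fun j => if i = j then (1:ℝ) else 0) := ISaux.seminorm_sum_le N _ _
    _ ≤ ∑ i, N (fun j => if i = j then (1:ℝ) else 0) * ‖v‖ := by
        refine Finset.sum_le_sum fun i _ => ?_
        rw [map_smul_eq_mul, mul_comm]
        refine mul_le_mul_of_nonneg_left ?_ (apply_nonneg N _)
        calc |v i| = ‖v i‖ := (Real.norm_eq_abs _).symm
          _ ≤ ‖v‖ := norm_le_pi_norm v i
    _ = (∑ i, N (fun j => if i = j then (1:ℝ) else 0)) * ‖v‖ := by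
        rw [Finset.sum_mul]

lemma ISaux.seminorm_continuous {m : ℕ} (N : Seminorm ℝ (Fin m → ℝ)) :
    Continuous fun v => (N v : ℝ) := by
  obtain ⟨CN, hCN0, hCN⟩ := ISaux.seminorm_le N
  refine (LipschitzWith.of_dist_le_mul (K := Real.toNNReal CN) fun u v => ?_).continuous
  rw [Real.dist_eq, dist_eq_norm, Real.coe_toNNReal _ hCN0]
  refine abs_sub_le_iff.2 ⟨?_, ?_⟩
  · have := map_add_le_add N (u - v) v
    simp only [sub_add_cancel] at this
    linarith [hCN (u - v)]
  · have := map_add_le_add N (v - u) u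
    simp only [sub_add_cancel] at this
    have h2 : N (v - u) = N (u - v) := map_sub_rev N v u
    linarith [hCN (u - v)]

lemma ISaux.seminorm_ge {m : ℕ} (N : Seminorm ℝ (Fin m → ℝ)) (hN : ∀ v, N v = 0 → v = 0) :
    ∃ c : ℝ, 0 < c ∧ ∀ v, c * ‖v‖ ≤ N v := by
  rcases subsingleton_or_nontrivial (Fin m → ℝ) with hs | hs
  · refine ⟨1, one_pos, fun v => ?_⟩
    have : v = 0 := Subsingleton.elim v 0
    simp [this]
  · have hsph : (sphere (0 : Fin m → ℝ) 1).Nonempty := NormedSpace.sphere_nonempty.2 zero_le_one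
    obtain ⟨v₀, hv₀mem, hv₀min⟩ := (isCompact_sphere (0 : Fin m → ℝ) 1).exists_isMinOn hsph
      (ISaux.seminorm_continuous N).continuousOn
    set c := N v₀ with hc
    have hv₀ : ‖v₀‖ = 1 := by simpa using mem_sphere_zero_iff_norm.1 hv₀mem
    have hcpos : 0 < c := by
      rcases (apply_nonneg N v₀).lt_or_eq with h | h
      · exact h
      · exfalso
        have : v₀ = 0 := hN v₀ h.symm
        rw [this] at hv₀; simp at hv₀
    refine ⟨c, hcpos, fun v => ?_⟩
    rcases eq_or_ne v 0 with rfl | hv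
    · simp
    · have hnv : 0 < ‖v‖ := norm_pos_iff.2 hv
      have hmem : (‖v‖⁻¹ • v) ∈ sphere (0 : Fin m → ℝ) 1 := by
        rw [mem_sphere_zero_iff_norm, norm_smul, norm_inv, norm_norm]
        field_simp
      have h1 : c ≤ N (‖v‖⁻¹ • v) := hv₀min hmem
      rw [map_smul_eq_mul, Real.norm_eq_abs, abs_inv, abs_of_pos hnv] at h1
      rw [mul_comm]
      calc ‖v‖ * c ≤ ‖v‖ * (‖v‖⁻¹ * N v) := mul_le_mul_of_nonneg_left h1 hnv.le
        _ = N v := by field_simp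

lemma ISaux.net_lemma {m : ℕ} (N : Seminorm ℝ (Fin m → ℝ)) (CN : ℝ) (hCN : 0 ≤ CN)
    (hle : ∀ v, N v ≤ CN * ‖v‖)
    (T D : Set (Fin m → ℝ))
    (hdense : ∀ y ∈ T, ∀ ε > 0, ∃ d ∈ D, dist y d < ε)
    (hbdd : IsBounded T) (δ : ℝ) (hδ : 0 < δ) :
    ∃ S : Set (Fin m → ℝ), S.Finite ∧ S ⊆ D ∧ ∀ t ∈ T, ∃ d ∈ S, N (t - d) ≤ δ := by
  classical
  set ε' : ℝ := δ / (2 * (CN + 1)) with hε'def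
  have hε' : 0 < ε' := by positivity
  have hTB : TotallyBounded T :=
    (hbdd.isCompact_closure.totallyBounded).subset subset_closure
  obtain ⟨net, hnetT, hnetfin, hcover⟩ := finite_approx_of_totallyBounded hTB ε' hε'
  choose! φ hφD hφd using fun y (hy : y ∈ net) => hdense y (hnetT hy) ε' hε'
  refine ⟨φ '' net, hnetfin.image φ, ?_, ?_⟩
  · rintro _ ⟨y, hy, rfl⟩; exact hφD y hy
  · intro t ht
    obtain ⟨y, hy, hty⟩ := Set.mem_iUnion₂.1 (hcover ht)
    refine ⟨φ y, Set.mem_image_of_mem φ hy, ?_⟩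
    have h1 : dist t (φ y) < 2 * ε' := by
      calc dist t (φ y) ≤ dist t y + dist y (φ y) := dist_triangle _ _ _
        _ < ε' + ε' := add_lt_add (mem_ball.1 hty) (hφd y hy)
        _ = 2 * ε' := by ring
    calc N (t - φ y) ≤ CN * ‖t - φ y‖ := hle _
      _ = CN * dist t (φ y) := by rw [dist_eq_norm]
      _ ≤ CN * (2 * ε') := mul_le_mul_of_nonneg_left h1.le hCN
      _ = CN * δ / (CN + 1) := by rw [hε'def]; field_simp
      _ ≤ δ := by
          rw [div_le_iff₀ (by positivity)]
          nlinarith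

/-- coercion of a real `ciInf` to `EReal`. -/
lemma ISaux.coe_ciInf {ι : Type*} [Nonempty ι] (h : ι → ℝ) (hb : BddBelow (Set.range h)) :
    (⨅ i, ((h i : ℝ) : EReal)) = (((⨅ i, h i : ℝ)) : EReal) :=
  (Monotone.map_ciInf_of_continuousAt (continuous_coe_real_ereal.continuousAt)
    (fun _ _ hxy => EReal.coe_le_coe_iff.2 hxy) hb).symm

lemma ISaux.eabs_coe (r : ℝ) : eabs ((r : ℝ) : EReal) = ((|r| : ℝ) : EReal) := by
  rw [eabs, ← EReal.coe_neg]
  rcases le_total r (-r) with h | h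
  · rw [max_eq_right (EReal.coe_le_coe_iff.2 h), abs_of_nonpos (by linarith)]
  · rw [max_eq_left (EReal.coe_le_coe_iff.2 h), abs_of_nonneg (by linarith)]

/-- withDensity integrability transfer. -/
lemma ISaux.wd_int (q : ℝ → ℝ) (hqm : Measurable q) (hq0 : ∀ x, 0 ≤ q x) (h : ℝ → ℝ) :
    Integrable h (volume.withDensity (fun x => ENNReal.ofReal (q x))) ↔
      Integrable (fun x => q x * h x) volume := by
  have he : (fun x => ENNReal.ofReal (q x)) = fun x => ((Real.toNNReal (q x) : ℝ≥0) : ℝ≥0∞) := by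
    ext x; simp [ENNReal.ofReal]
  rw [he, integrable_withDensity_iff_integrable_smul (by exact hqm.real_toNNReal)]
  apply integrable_congr
  filter_upwards with x
  simp [NNReal.smul_def, Real.coe_toNNReal _ (hq0 x)]

lemma ISaux.wd_eq (q : ℝ → ℝ) (hqm : Measurable q) (hq0 : ∀ x, 0 ≤ q x) (h : ℝ → ℝ) :
    ∫ x, h x ∂(volume.withDensity (fun x => ENNReal.ofReal (q x))) = ∫ x, q x * h x := by
  have he : (fun x => ENNReal.ofReal (q x)) = fun x => ((Real.toNNReal (q x) : ℝ≥0) : ℝ≥0∞) := by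
    ext x; simp [ENNReal.ofReal]
  rw [he, integral_withDensity_eq_integral_smul (by exact hqm.real_toNNReal)]
  congr 1; ext x
  simp [NNReal.smul_def, Real.coe_toNNReal _ (hq0 x)]

set_option maxHeartbeats 2000000 in
/-- **Importance sampling, Lipschitz densities.** In the importance-sampling
setting, if the index set `T ⊆ ℝ^m` (with a norm `‖·‖`) is bounded and there is a Borel
measurable `F : ℝ → ℝ` with `∫ |f| F dx < +∞` such that
`|p_s(x) − p_t(x)| ≤ ‖s − t‖·F(x)` for all `s, t ∈ T`, `x ∈ ℝ`, then the importance-sampling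
estimator `Ê̲_n^{𝒫/P}(f)` is a strongly consistent estimator of `E̲^𝒫(f)`. -/
theorem importance_sampling_lipschitz_consistency
    {m : ℕ} (N : Seminorm ℝ (Fin m → ℝ)) (hN : ∀ v, N v = 0 → v = 0)
    (T : Set (Fin m → ℝ)) (hTne : T.Nonempty)
    (hTbdd : ∃ R : ℝ, ∀ t ∈ T, N t ≤ R)
    -- the central probability measure `P`, with density `p`
    (p : ℝ → ℝ) (hpm : Measurable p) (hp0 : ∀ x, 0 ≤ p x)
    (P : Measure ℝ) (hP : P = volume.withDensity (fun x => ENNReal.ofReal (p x)))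
    [IsProbabilityMeasure P]
    -- the densities `p_t` of the measures `P_t`, `t ∈ T`
    (pt : (Fin m → ℝ) → ℝ → ℝ)
    (hptm : ∀ t ∈ T, Measurable (pt t)) (hpt0 : ∀ t ∈ T, ∀ x, 0 ≤ pt t x)
    (Pt : (Fin m → ℝ) → Measure ℝ)
    (hPt : ∀ t ∈ T, Pt t = volume.withDensity (fun x => ENNReal.ofReal (pt t x)))
    (hPtprob : ∀ t ∈ T, IsProbabilityMeasure (Pt t))
    (hsupp : ∀ t ∈ T, ∀ x, pt t x ≠ 0 → p x ≠ 0)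
    (f : ℝ → ℝ) (hf : Measurable f)
    (hfint : ∀ t ∈ T, Integrable f (Pt t))
    (hsup : BddAbove ((fun t => ∫ x, |f x| ∂(Pt t)) '' T))
    (F : ℝ → ℝ) (hFm : Measurable F)
    (hfF : ∫⁻ x, ENNReal.ofReal (|f x| * F x) ≠ ⊤)
    (hlip : ∀ s ∈ T, ∀ t ∈ T, ∀ x : ℝ, |pt s x - pt t x| ≤ N (s - t) * F x)
    (μ : Measure (ℕ → ℝ)) [IsProbabilityMeasure μ]
    (hmap : ∀ k : ℕ, μ.map (fun ω => ω k) = P)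
    (hind : iIndepFun (m := fun _ : ℕ => (inferInstance : MeasurableSpace ℝ))
      (fun k (ω : ℕ → ℝ) => ω k) μ) :
    ∃ H : ℕ → (ℕ → ℝ) → EReal,
      (∀ n : ℕ, IsMinMeasCover μ
        (fun ω => eabs ((⨅ t : T, (((n : ℝ)⁻¹ *
            ∑ k ∈ Finset.range n, f (ω k) * pt t (ω k) / p (ω k) : ℝ) : EReal)) -
          ⨅ t : T, ((∫ x, f x ∂(Pt t) : ℝ) : EReal))) (H n)) ∧
      ∀ᵐ ω ∂μ, Tendsto (fun n : ℕ => H n ω) atTop (𝓝 (0 : EReal)) := by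
  classical
  obtain ⟨t₀, ht₀⟩ := hTne
  haveI : Nonempty ↥T := ⟨⟨t₀, ht₀⟩⟩
  obtain ⟨R, hR⟩ := hTbdd
  have hR0 : (0:ℝ) ≤ R := le_trans (apply_nonneg N t₀) (hR t₀ ht₀)
  obtain ⟨CN, hCN0, hCNle⟩ := ISaux.seminorm_le N
  obtain ⟨c, hc0, hcge⟩ := ISaux.seminorm_ge N hN
  -- difference of two points of `T` has seminorm at most `2R`
  have hNdiff : ∀ s ∈ T, ∀ t ∈ T, N (s - t) ≤ 2 * R := by
    intro s hs t ht
    calc N (s - t) ≤ N s + N t := by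
          rw [sub_eq_add_neg]
          exact (map_add_le_add N s (-t)).trans (by rw [map_neg_eq_map])
      _ ≤ 2 * R := by linarith [hR s hs, hR t ht]
  -- replace F by its positive part
  set Fp : ℝ → ℝ := fun x => max (F x) 0 with hFpdef
  have hFpm : Measurable Fp := hFm.max measurable_const
  have hFp0 : ∀ x, 0 ≤ Fp x := fun x => le_max_right _ _
  have hlip' : ∀ s ∈ T, ∀ t ∈ T, ∀ x : ℝ, |pt s x - pt t x| ≤ N (s - t) * Fp x := by
    intro s hs t ht x
    exact (hlip s hs t ht x).trans
      (mul_le_mul_of_nonneg_left (le_max_left _ _) (apply_nonneg N _))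
  have hfFp : ∫⁻ x, ENNReal.ofReal (|f x| * Fp x) ≠ ⊤ := by
    have : ∀ x, ENNReal.ofReal (|f x| * Fp x) = ENNReal.ofReal (|f x| * F x) := by
      intro x
      rcases le_or_gt 0 (F x) with h | h
      · simp [hFpdef, max_eq_left h]
      · rw [hFpdef]
        simp only [max_eq_right h.le]
        rw [mul_zero, ENNReal.ofReal_zero,
          ENNReal.ofReal_of_nonpos (mul_nonpos_of_nonneg_of_nonpos (abs_nonneg _) h.le)]
    simpa only [this] using hfF
  -- |f| * Fp is integrable over volume
  have hfFint : Integrable (fun x => |f x| * Fp x) volume := by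
    refine ⟨(hf.abs.mul hFpm).aestronglyMeasurable, ?_⟩
    rw [hasFiniteIntegral_iff_ofReal (Filter.Eventually.of_forall fun x =>
      mul_nonneg (abs_nonneg _) (hFp0 x))]
    exact hfFp.lt_top
  set C₀ : ℝ := ∫ x, |f x| * Fp x with hC₀def
  have hC₀0 : 0 ≤ C₀ := integral_nonneg fun x => mul_nonneg (abs_nonneg _) (hFp0 x)
  -- the integrand family and the envelope
  set g : (Fin m → ℝ) → ℝ → ℝ := fun t x => f x * pt t x / p x with hgdef
  set Ft : ℝ → ℝ := fun x => |f x| * Fp x / p x with hFtdef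
  have hFtm : Measurable Ft := (hf.abs.mul hFpm).div hpm
  have hFt0 : ∀ x, 0 ≤ Ft x := fun x =>
    div_nonneg (mul_nonneg (abs_nonneg _) (hFp0 x)) (hp0 x)
  have hgm : ∀ t ∈ T, Measurable (g t) := fun t ht => (hf.mul (hptm t ht)).div hpm
  -- pointwise product identity
  have hmulid : ∀ t ∈ T, ∀ x, p x * g t x = pt t x * f x := by
    intro t ht x
    rcases eq_or_ne (p x) 0 with hpx | hpx
    · have hptx : pt t x = 0 := by
        by_contra hne
        exact (hsupp t ht x hne) hpx
      simp [hgdef, hpx, hptx]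
    · rw [hgdef]
      field_simp
  -- integrability of `g t` w.r.t. `P` and the key integral identity
  have hfptint : ∀ t ∈ T, Integrable (fun x => pt t x * f x) volume := by
    intro t ht
    have := hfint t ht
    rwa [hPt t ht, ISaux.wd_int (pt t) (hptm t ht) (hpt0 t ht) f] at this
  have hgint : ∀ t ∈ T, Integrable (g t) P := by
    intro t ht
    rw [hP, ISaux.wd_int p hpm hp0]
    exact (integrable_congr (Filter.Eventually.of_forall fun x =>
      (hmulid t ht x).symm)).mp (hfptint t ht)
  have hBdef : ∀ t ∈ T, ∫ x, f x ∂(Pt t) = ∫ x, pt t x * f x := by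
    intro t ht
    rw [hPt t ht, ISaux.wd_eq (pt t) (hptm t ht) (hpt0 t ht) f]
  have hgeq : ∀ t ∈ T, ∫ x, g t x ∂P = ∫ x, f x ∂(Pt t) := by
    intro t ht
    rw [hP, ISaux.wd_eq p hpm hp0, hBdef t ht]
    exact integral_congr_ae (Filter.Eventually.of_forall fun x => hmulid t ht x)
  -- `Ft` is integrable w.r.t. `P`
  have hFtint : Integrable Ft P := by
    rw [hP, ISaux.wd_int p hpm hp0]
    refine hfFint.mono (hpm.mul hFtm).aestronglyMeasurable
      (Filter.Eventually.of_forall fun x => ?_)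
    rcases eq_or_ne (p x) 0 with hpx | hpx
    · simp only [hpx, zero_mul, norm_zero]
      exact norm_nonneg _
    · have : p x * Ft x = |f x| * Fp x := by
        rw [hFtdef]; field_simp
      rw [Real.norm_eq_abs, Real.norm_eq_abs, this]
  set C : ℝ := ∫ x, Ft x ∂P with hCdef
  have hC0 : 0 ≤ C := integral_nonneg hFt0
  -- pointwise Lipschitz bound for `g`
  have hglip : ∀ s ∈ T, ∀ t ∈ T, ∀ x, |g s x - g t x| ≤ N (s - t) * Ft x := by
    intro s hs t ht x
    rcases eq_or_ne (p x) 0 with hpx | hpx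
    · simp [hgdef, hFtdef, hpx]
    · have hppos : 0 < p x := lt_of_le_of_ne (hp0 x) (Ne.symm hpx)
      have h1 : g s x - g t x = f x * (pt s x - pt t x) / p x := by
        rw [hgdef]; field_simp
      rw [h1, abs_div, abs_of_pos hppos, abs_mul]
      rw [div_le_iff₀ hppos]
      have h2 : |f x| * |pt s x - pt t x| ≤ |f x| * (N (s - t) * Fp x) :=
        mul_le_mul_of_nonneg_left (hlip' s hs t ht x) (abs_nonneg _)
      refine h2.trans (le_of_eq ?_)
      rw [hFtdef]
      field_simp
  -- Lipschitz bound for the means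
  have hBlip : ∀ s ∈ T, ∀ t ∈ T,
      |(∫ x, f x ∂(Pt s)) - ∫ x, f x ∂(Pt t)| ≤ N (s - t) * C₀ := by
    intro s hs t ht
    rw [hBdef s hs, hBdef t ht, ← integral_sub (hfptint s hs) (hfptint t ht)]
    calc |∫ x, (pt s x * f x - pt t x * f x)| ≤ ∫ x, |pt s x * f x - pt t x * f x| := by
          simpa [Real.norm_eq_abs] using
            norm_integral_le_integral_norm (μ := volume)
              (fun x => pt s x * f x - pt t x * f x)
      _ ≤ ∫ x, N (s - t) * (|f x| * Fp x) := by
          refine integral_mono ((hfptint s hs).sub (hfptint t ht)).abs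
            (hfFint.const_mul _) fun x => ?_
          have : pt s x * f x - pt t x * f x = f x * (pt s x - pt t x) := by ring
          rw [this, abs_mul]
          calc |f x| * |pt s x - pt t x| ≤ |f x| * (N (s - t) * Fp x) :=
                mul_le_mul_of_nonneg_left (hlip' s hs t ht x) (abs_nonneg _)
            _ = N (s - t) * (|f x| * Fp x) := by ring
      _ = N (s - t) * C₀ := by rw [integral_const_mul]
  -- the empirical quantities
  set A : ℕ → (ℕ → ℝ) → (Fin m → ℝ) → ℝ :=
    fun n ω t => (n : ℝ)⁻¹ * ∑ k ∈ Finset.range n, g t (ω k) with hAdef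
  set K : ℕ → (ℕ → ℝ) → ℝ :=
    fun n ω => (n : ℝ)⁻¹ * ∑ k ∈ Finset.range n, Ft (ω k) with hKdef
  have hKnn : ∀ n ω, 0 ≤ K n ω := fun n ω =>
    mul_nonneg (inv_nonneg.2 (Nat.cast_nonneg n))
      (Finset.sum_nonneg fun k _ => hFt0 (ω k))
  have hAlip : ∀ s ∈ T, ∀ t ∈ T, ∀ n ω, |A n ω s - A n ω t| ≤ N (s - t) * K n ω := by
    intro s hs t ht n ω
    have h1 : A n ω s - A n ω t
        = (n : ℝ)⁻¹ * ∑ k ∈ Finset.range n, (g s (ω k) - g t (ω k)) := by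
      rw [hAdef, Finset.sum_sub_distrib]
      ring
    rw [h1, abs_mul, abs_of_nonneg (inv_nonneg.2 (Nat.cast_nonneg n))]
    calc (n : ℝ)⁻¹ * |∑ k ∈ Finset.range n, (g s (ω k) - g t (ω k))|
        ≤ (n : ℝ)⁻¹ * ∑ k ∈ Finset.range n, |g s (ω k) - g t (ω k)| := by
          exact mul_le_mul_of_nonneg_left (Finset.abs_sum_le_sum_abs _ _)
            (inv_nonneg.2 (Nat.cast_nonneg n))
      _ ≤ (n : ℝ)⁻¹ * ∑ k ∈ Finset.range n, N (s - t) * Ft (ω k) := by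
          refine mul_le_mul_of_nonneg_left (Finset.sum_le_sum fun k _ => ?_)
            (inv_nonneg.2 (Nat.cast_nonneg n))
          exact hglip s hs t ht (ω k)
      _ = N (s - t) * K n ω := by
          rw [hKdef, ← Finset.mul_sum]
          ring
  -- lower bounds
  have hAbdd : ∀ n ω, BddBelow (Set.range fun t : T => A n ω t) := by
    intro n ω
    refine ⟨A n ω t₀ - 2 * R * K n ω, ?_⟩
    rintro _ ⟨t, rfl⟩
    have h1 := hAlip t t.2 t₀ ht₀ n ω
    have h2 : N ((t : Fin m → ℝ) - t₀) * K n ω ≤ 2 * R * K n ω :=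
      mul_le_mul_of_nonneg_right (hNdiff t t.2 t₀ ht₀) (hKnn n ω)
    have h3 := abs_le.1 h1
    linarith [h3.1]
  have hBbdd : BddBelow (Set.range fun t : T => ∫ x, f x ∂(Pt t)) := by
    refine ⟨(∫ x, f x ∂(Pt t₀)) - 2 * R * C₀, ?_⟩
    rintro _ ⟨t, rfl⟩
    have h1 := hBlip t t.2 t₀ ht₀
    have h2 : N ((t : Fin m → ℝ) - t₀) * C₀ ≤ 2 * R * C₀ :=
      mul_le_mul_of_nonneg_right (hNdiff t t.2 t₀ ht₀) hC₀0
    have h3 := abs_le.1 h1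
    linarith [h3.1]
  -- countable dense subset of T
  obtain ⟨D₀, hD₀c, hD₀d⟩ := TopologicalSpace.exists_countable_dense (↥T)
  set D : Set (Fin m → ℝ) := Subtype.val '' D₀ with hDdef
  have hDT : D ⊆ T := by
    rintro _ ⟨z, _, rfl⟩; exact z.2
  have hDc : D.Countable := hD₀c.image _
  have hdense : ∀ y ∈ T, ∀ ε > 0, ∃ d ∈ D, dist y d < ε := by
    intro y hy ε hε
    obtain ⟨z, hz1, hz2⟩ := Metric.dense_iff.1 hD₀d ⟨y, hy⟩ ε hε
    exact ⟨(z : Fin m → ℝ), ⟨z, hz2, rfl⟩, by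
      have := mem_ball.1 hz1
      rw [Subtype.dist_eq] at this
      rw [dist_comm]
      exact this⟩
  obtain ⟨d₀, hd₀D, _⟩ := hdense t₀ ht₀ 1 one_pos
  haveI : Nonempty ↥D := ⟨⟨d₀, hd₀D⟩⟩
  -- T is metrically bounded
  have hTbddM : IsBounded T := by
    rw [isBounded_iff_forall_norm_le]
    refine ⟨c⁻¹ * R, fun t ht => ?_⟩
    have h1 := hcge t
    have h2 := hR t ht
    rw [← le_div_iff₀' hc0] at h1
    calc ‖t‖ ≤ N t / c := h1
      _ ≤ R / c := by gcongr
      _ = c⁻¹ * R := by rw [div_eq_inv_mul]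
  -- infimum over T equals infimum over D for Lipschitz functions
  have hinfeq : ∀ (φ : (Fin m → ℝ) → ℝ) (L : ℝ), 0 ≤ L →
      (∀ s ∈ T, ∀ t ∈ T, |φ s - φ t| ≤ N (s - t) * L) →
      BddBelow (Set.range fun t : T => φ t) →
      (⨅ t : T, φ t) = ⨅ d : ↥D, φ d := by
    intro φ L hL hφ hbdd
    have hbddD : BddBelow (Set.range fun d : ↥D => φ d) := by
      obtain ⟨b, hb⟩ := hbdd
      refine ⟨b, ?_⟩
      rintro _ ⟨d, rfl⟩
      exact hb ⟨⟨(d : Fin m → ℝ), hDT d.2⟩, rfl⟩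
    refine le_antisymm (le_ciInf fun d => ciInf_le hbdd ⟨(d : Fin m → ℝ), hDT d.2⟩) ?_
    refine le_ciInf fun t => le_of_forall_pos_le_add fun ε hε => ?_
    obtain ⟨d, hdD, hdd⟩ := hdense t t.2 (ε / (CN * L + 1)) (by positivity)
    have hNd : N ((t : Fin m → ℝ) - d) * L ≤ ε := by
      have h1 : N ((t : Fin m → ℝ) - d) ≤ CN * dist (t : Fin m → ℝ) d := by
        rw [dist_eq_norm]; exact hCNle _
      calc N ((t : Fin m → ℝ) - d) * L ≤ CN * dist (t : Fin m → ℝ) d * L :=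
            mul_le_mul_of_nonneg_right h1 hL
        _ ≤ CN * (ε / (CN * L + 1)) * L := by
            refine mul_le_mul_of_nonneg_right
              (mul_le_mul_of_nonneg_left hdd.le hCN0) hL
        _ = ε * ((CN * L) / (CN * L + 1)) := by ring
        _ ≤ ε * 1 := by
            refine mul_le_mul_of_nonneg_left ?_ hε.le
            rw [div_le_one (by positivity)]
            linarith
        _ = ε := mul_one ε
    have h2 : φ d ≤ φ t + ε := by
      have := abs_le.1 (hφ d (hDT hdD) t t.2)
      have h3 : N (d - (t : Fin m → ℝ)) = N ((t : Fin m → ℝ) - d) := map_sub_rev N d t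
      nlinarith [this.2]
    exact le_trans (ciInf_le hbddD ⟨d, hdD⟩) h2
  -- real infima
  set InfA : ℕ → (ℕ → ℝ) → ℝ := fun n ω => ⨅ t : T, A n ω t with hInfAdef
  set InfB : ℝ := ⨅ t : T, ∫ x, f x ∂(Pt t) with hInfBdef
  have hInfAD : ∀ n ω, InfA n ω = ⨅ d : ↥D, A n ω d := fun n ω =>
    hinfeq (A n ω) (K n ω) (hKnn n ω) (fun s hs t ht => hAlip s hs t ht n ω) (hAbdd n ω)
  -- enumeration of D
  obtain ⟨e, he2⟩ := hDc.exists_eq_range ⟨d₀, hd₀D⟩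
  have heD : ∀ i, e i ∈ D := fun i => by rw [he2]; exact ⟨i, rfl⟩
  have hInfAe : ∀ n ω, InfA n ω = ⨅ i : ℕ, A n ω (e i) := by
    intro n ω
    rw [hInfAD n ω]
    rw [iInf, iInf]
    congr 1
    ext y
    simp only [Set.mem_range]
    constructor
    · rintro ⟨⟨d, hd⟩, rfl⟩
      rw [he2] at hd
      obtain ⟨i, rfl⟩ := hd
      exact ⟨i, rfl⟩
    · rintro ⟨i, rfl⟩
      exact ⟨⟨e i, heD i⟩, rfl⟩
  -- define H
  set H : ℕ → (ℕ → ℝ) → EReal := fun n ω => ((|InfA n ω - InfB| : ℝ) : EReal) with hHdef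
  -- H is measurable
  have hAmeas : ∀ n (t : Fin m → ℝ), t ∈ T → Measurable fun ω : ℕ → ℝ => A n ω t := by
    intro n t ht
    apply Measurable.const_mul
    apply Finset.measurable_sum
    intro k _
    exact (hgm t ht).comp (measurable_pi_apply k)
  have hInfAmeas : ∀ n, Measurable fun ω => InfA n ω := by
    intro n
    have h1 : ∀ ω, InfA n ω = (⨅ i : ℕ, ((A n ω (e i) : ℝ) : EReal)).toReal := by
      intro ω
      rw [ISaux.coe_ciInf (fun i => A n ω (e i)) ?_, EReal.toReal_coe, hInfAe n ω]
      obtain ⟨b, hb⟩ := hAbdd n ω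
      refine ⟨b, ?_⟩
      rintro _ ⟨i, rfl⟩
      exact hb ⟨⟨e i, hDT (heD i)⟩, rfl⟩
    simp only [h1]
    apply measurable_ereal_toReal.comp
    apply Measurable.iInf
    intro i
    exact measurable_coe_real_ereal.comp (hAmeas n (e i) (hDT (heD i)))
  have hHmeas : ∀ n, Measurable (H n) := by
    intro n
    exact measurable_coe_real_ereal.comp ((hInfAmeas n).sub measurable_const).abs
  -- H equals the target function pointwise
  have hHeq : ∀ (n : ℕ) (ω : ℕ → ℝ),
      eabs ((⨅ t : T, (((n : ℝ)⁻¹ *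
          ∑ k ∈ Finset.range n, f (ω k) * pt t (ω k) / p (ω k) : ℝ) : EReal)) -
        ⨅ t : T, ((∫ x, f x ∂(Pt t) : ℝ) : EReal)) = H n ω := by
    intro n ω
    have h1 : (⨅ t : T, (((n : ℝ)⁻¹ *
        ∑ k ∈ Finset.range n, f (ω k) * pt t (ω k) / p (ω k) : ℝ) : EReal))
        = ((InfA n ω : ℝ) : EReal) := by
      have : ∀ t : T, ((n : ℝ)⁻¹ *
          ∑ k ∈ Finset.range n, f (ω k) * pt t (ω k) / p (ω k) : ℝ) = A n ω t := by
        intro t; rfl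
      simp only [this]
      exact ISaux.coe_ciInf (fun t : T => A n ω t) (hAbdd n ω)
    have h2 : (⨅ t : T, ((∫ x, f x ∂(Pt t) : ℝ) : EReal)) = ((InfB : ℝ) : EReal) :=
      ISaux.coe_ciInf (fun t : T => ∫ x, f x ∂(Pt t)) hBbdd
    rw [h1, h2, ← EReal.coe_sub, ISaux.eabs_coe, hHdef]
  -- almost sure event
  have hae : ∀ᵐ ω ∂μ, Tendsto (fun n => K n ω) atTop (𝓝 C) ∧
      ∀ d ∈ D, Tendsto (fun n => A n ω d) atTop (𝓝 (∫ x, f x ∂(Pt d))) := by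
    refine (ISaux.slln μ P hmap hind Ft hFtm hFtint).and ?_
    rw [ae_ball_iff hDc]
    intro d hd
    have := ISaux.slln μ P hmap hind (g d) (hgm d (hDT hd)) (hgint d (hDT hd))
    filter_upwards [this] with ω hω
    rw [← hgeq d (hDT hd)]
    exact hω
  refine ⟨H, fun n => ⟨hHmeas n, fun ω => le_of_eq (hHeq n ω), fun g' hg'm hg'le => ?_⟩,
    ?_⟩
  · exact Filter.Eventually.of_forall fun ω => (hHeq n ω) ▸ hg'le ω
  · filter_upwards [hae] with ω hω
    obtain ⟨hωK, hωA⟩ := hω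
    -- main estimate: InfA n ω → InfB
    have hmain : Tendsto (fun n => InfA n ω) atTop (𝓝 InfB) := by
      rw [Metric.tendsto_atTop]
      intro ε hε
      -- we show |InfA n ω - InfB| ≤ ε/2 eventually
      set M : ℝ := C + 1 + C₀ with hMdef
      have hM : 0 < M := by rw [hMdef]; linarith
      set δ : ℝ := ε / 2 / (3 * M) with hδdef
      have hδ : 0 < δ := by positivity
      obtain ⟨S, hSfin, hSD, hSnet⟩ :=
        ISaux.net_lemma N CN hCN0 hCNle T D hdense hTbddM δ hδ
      have hev1 : ∀ᶠ n in atTop, K n ω < C + 1 := by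
        have : Tendsto (fun n => K n ω) atTop (𝓝 C) := hωK
        exact this.eventually_lt_const (by linarith)
      have hev2 : ∀ᶠ n in atTop, ∀ d ∈ S, |A n ω d - ∫ x, f x ∂(Pt d)| < ε / 2 / 3 := by
        rw [eventually_all_finite hSfin]
        intro d hd
        have h1 := hωA d (hSD hd)
        have := Metric.tendsto_atTop.1 h1
        obtain ⟨Nn, hNn⟩ := this (ε / 2 / 3) (by positivity)
        rw [eventually_atTop]
        exact ⟨Nn, fun n hn => by
          have := hNn n hn
          rwa [Real.dist_eq] at this⟩
      obtain ⟨Nn, hNn⟩ := eventually_atTop.1 (hev1.and hev2)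
      refine ⟨Nn, fun n hn => ?_⟩
      obtain ⟨hK1, hA1⟩ := hNn n hn
      -- uniform bound over T
      have huni : ∀ t ∈ T, |A n ω t - ∫ x, f x ∂(Pt t)| ≤ ε / 2 := by
        intro t ht
        obtain ⟨d, hdS, hdnet⟩ := hSnet t ht
        have hdT : d ∈ T := hDT (hSD hdS)
        have e1 : |A n ω t - A n ω d| ≤ δ * (C + 1) := by
          refine (hAlip t ht d hdT n ω).trans ?_
          calc N (t - d) * K n ω ≤ δ * K n ω :=
                mul_le_mul_of_nonneg_right hdnet (hKnn n ω)
            _ ≤ δ * (C + 1) := mul_le_mul_of_nonneg_left hK1.le hδ.le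
        have e2 : |A n ω d - ∫ x, f x ∂(Pt d)| ≤ ε / 2 / 3 := (hA1 d hdS).le
        have e3 : |(∫ x, f x ∂(Pt d)) - ∫ x, f x ∂(Pt t)| ≤ δ * C₀ := by
          refine (hBlip d hdT t ht).trans ?_
          have : N (d - t) = N (t - d) := map_sub_rev N d t
          rw [this]
          exact mul_le_mul_of_nonneg_right hdnet hC₀0
        have e4 : δ * (C + 1) + δ * C₀ ≤ ε / 2 / 3 + ε / 2 / 3 := by
          have : δ * (C + 1) + δ * C₀ = δ * M := by rw [hMdef]; ring
          rw [this, hδdef]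
          rw [div_mul_eq_mul_div, div_le_iff₀ (by positivity)]
          ring_nf
          nlinarith
        have h5 := abs_sub_le (A n ω t) (A n ω d) (∫ x, f x ∂(Pt t))
        have h6 := abs_sub_le (A n ω d) (∫ x, f x ∂(Pt d)) (∫ x, f x ∂(Pt t))
        linarith
      -- conclude for the infima
      have hle1 : InfA n ω ≤ InfB + ε / 2 := by
        have h1 : ∀ t : T, InfA n ω - ε / 2 ≤ ∫ x, f x ∂(Pt t) := by
          intro t
          have h2 : InfA n ω ≤ A n ω t := ciInf_le (hAbdd n ω) t
          have h3 := abs_le.1 (huni t t.2)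
          linarith [h3.1]
        have h4 : InfA n ω - ε / 2 ≤ InfB := by
          simp only [hInfBdef]; exact le_ciInf h1
        linarith
      have hle2 : InfB ≤ InfA n ω + ε / 2 := by
        have h1 : ∀ t : T, InfB - ε / 2 ≤ A n ω t := by
          intro t
          have h2 : InfB ≤ ∫ x, f x ∂(Pt t) := ciInf_le hBbdd t
          have h3 := abs_le.1 (huni t t.2)
          linarith [h3.2]
        have h4 : InfB - ε / 2 ≤ InfA n ω := by
          simp only [hInfAdef]; exact le_ciInf h1
        linarith
      rw [Real.dist_eq]
      have : |InfA n ω - InfB| ≤ ε / 2 := abs_le.2 ⟨by linarith, by linarith⟩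
      linarith
    -- transfer to EReal
    have h0 : Tendsto (fun n => |InfA n ω - InfB|) atTop (𝓝 0) := by
      have h1 : Tendsto (fun n => InfA n ω - InfB) atTop (𝓝 (InfB - InfB)) :=
        hmain.sub tendsto_const_nhds
      rw [sub_self] at h1
      have := h1.abs
      rwa [abs_zero] at this
    have : Tendsto (fun n => H n ω) atTop (𝓝 (((0:ℝ) : EReal))) := by
      exact (continuous_coe_real_ereal.tendsto 0).comp h0
    simpa using this
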